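/- Let 0 < q < 1 and n ∈ ℕ. Then | ∏_{k=1}^∞ (1 − q^k) − 1 − Σ_{m=1}^{n} (−1)^m (q^{m(3m−1)/2} + q^{m(3m+1)/2}) | ≤ 2 · q^{(n+1)(3n+2)/2}. -/

import Mathlib

/-- Pentagonal numbers, defined recursively: `penta r = r*(3r-1)/2`. -/
def penta : ℕ → ℕ
  | 0 => 0
  | r + 1 => penta r + (3 * r + 1)

lemma penta_eq (r : ℕ) : penta r = r * (3 * r - 1) / 2 := by
  induction r with
  | zero => simp [penta]
  | succ r ih =>
    have h2 : (r + 1) * (3 * (r + 1) - 1) = r * (3 * r - 1) + 2 * (3 * r + 1) := by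
      cases r with
      | zero => norm_num
      | succ s =>
        have e1 : 3 * (s + 1) - 1 = 3 * s + 2 := by omega
        have e2 : 3 * (s + 1 + 1) - 1 = 3 * s + 5 := by omega
        rw [e1, e2]; ring
    have hev : 2 ∣ r * (3 * r - 1) := by
      rcases Nat.even_or_odd r with h | h
      · exact Dvd.dvd.mul_right h.two_dvd _
      · refine Dvd.dvd.mul_left ?_ _
        rcases h with ⟨k, hk⟩
        omega
    rw [penta, ih, h2]
    omega

lemma penta_add (r : ℕ) : penta r + r = r * (3 * r + 1) / 2 := by
  have h : r * (3 * r + 1) = r * (3 * r - 1) + 2 * r := by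
    cases r with
    | zero => norm_num
    | succ s =>
      have e1 : 3 * (s + 1) - 1 = 3 * s + 2 := by omega
      rw [e1]; ring
  have hev : 2 ∣ r * (3 * r - 1) := by
    rcases Nat.even_or_odd r with h | h
    · exact Dvd.dvd.mul_right h.two_dvd _
    · refine Dvd.dvd.mul_left ?_ _
      rcases h with ⟨k, hk⟩
      omega
  rw [penta_eq, h]
  omega

/-- Partial product `∏_{i<t} (1 - q^(j+i))`. -/
noncomputable def PP (q : ℝ) (j t : ℕ) : ℝ := ∏ i ∈ Finset.range t, (1 - q ^ (j + i))

/-- Euler's remainder series `R_r = Σ_{t≥0} q^(r t + penta r) Π_{i<t}(1-q^{r+i})`. -/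
noncomputable def RR (q : ℝ) (r : ℕ) : ℝ := ∑' t : ℕ, q ^ (r * t + penta r) * PP q r t

section aux

variable {q : ℝ}

lemma PP_nonneg (hq0 : 0 < q) (hq1 : q < 1) (j t : ℕ) : 0 ≤ PP q j t := by
  apply Finset.prod_nonneg
  intro i _
  have : q ^ (j + i) ≤ 1 := pow_le_one₀ hq0.le hq1.le
  linarith

lemma PP_le_one (hq0 : 0 < q) (hq1 : q < 1) (j t : ℕ) : PP q j t ≤ 1 := by
  apply Finset.prod_le_one
  · intro i _
    have : q ^ (j + i) ≤ 1 := pow_le_one₀ hq0.le hq1.le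
    linarith
  · intro i _
    have : 0 < q ^ (j + i) := pow_pos hq0 _
    linarith

lemma summable_aux (hq0 : 0 < q) (hq1 : q < 1) (r e j : ℕ) (hr : 1 ≤ r) :
    Summable (fun t : ℕ => q ^ (r * t + e) * PP q j t) := by
  have hgeo : Summable (fun t : ℕ => q ^ e * (q ^ r) ^ t) := by
    apply Summable.mul_left
    exact summable_geometric_of_lt_one (pow_nonneg hq0.le _)
      (pow_lt_one₀ hq0.le hq1 (by omega))
  apply Summable.of_nonneg_of_le _ _ hgeo
  · intro t
    exact mul_nonneg (pow_nonneg hq0.le _) (PP_nonneg hq0 hq1 j t)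
  · intro t
    have h1 : q ^ (r * t + e) * PP q j t ≤ q ^ (r * t + e) * 1 :=
      mul_le_mul_of_nonneg_left (PP_le_one hq0 hq1 j t) (pow_nonneg hq0.le _)
    calc q ^ (r * t + e) * PP q j t ≤ q ^ (r * t + e) := by linarith
      _ = q ^ e * (q ^ r) ^ t := by rw [← pow_mul, ← pow_add, Nat.add_comm]
  
lemma RR_summable (hq0 : 0 < q) (hq1 : q < 1) (r : ℕ) (hr : 1 ≤ r) :
    Summable (fun t : ℕ => q ^ (r * t + penta r) * PP q r t) :=
  summable_aux hq0 hq1 r _ r hr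

lemma RR_nonneg (hq0 : 0 < q) (hq1 : q < 1) (r : ℕ) : 0 ≤ RR q r := by
  apply tsum_nonneg
  intro t
  exact mul_nonneg (pow_nonneg hq0.le _) (PP_nonneg hq0 hq1 r t)

/-- The key recursion in Euler's proof of the pentagonal number theorem. -/
lemma RR_rec (hq0 : 0 < q) (hq1 : q < 1) (r : ℕ) (hr : 1 ≤ r) :
    RR q r = q ^ penta r + q ^ (penta r + r) - RR q (r + 1) := by
  -- shorthand sequences
  set a : ℕ → ℝ := fun t => q ^ (r * t + penta r) * PP q r t with ha
  set b : ℕ → ℝ := fun t => q ^ (r * t + (penta r + r)) * PP q (r + 1) t with hb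
  set c : ℕ → ℝ := fun t => q ^ (r * t + (penta r + 2 * r)) * PP q (r + 1) t with hc
  set d : ℕ → ℝ := fun t => q ^ ((r + 1) * t + penta (r + 1)) * PP q (r + 1) t with hd
  have hsa : Summable a := summable_aux hq0 hq1 r _ r hr
  have hsb : Summable b := summable_aux hq0 hq1 r _ (r + 1) hr
  have hsc : Summable c := summable_aux hq0 hq1 r _ (r + 1) hr
  have hsd : Summable d := summable_aux hq0 hq1 (r + 1) _ (r + 1) (by omega)
  -- step 1 : a (t+1) = b t - c t
  have hstep1 : ∀ t : ℕ, a (t + 1) = b t - c t := by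
    intro t
    have hP : PP q r (t + 1) = (1 - q ^ r) * PP q (r + 1) t := by
      simp only [PP]
      rw [Finset.prod_range_succ', Nat.add_zero, mul_comm]
      congr 1
      apply Finset.prod_congr rfl
      intro i _
      have h : r + (i + 1) = r + 1 + i := by omega
      rw [h]
    simp only [ha, hb, hc]
    rw [hP]
    have E1 : r * (t + 1) + penta r = r * t + (penta r + r) := by ring
    have E3 : r * t + (penta r + 2 * r) = r * t + (penta r + r) + r := by ring
    rw [E1, E3, pow_add]
    ring
  -- step 2 : b (t+1) = c t - d t
  have hstep2 : ∀ t : ℕ, b (t + 1) = c t - d t := by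
    intro t
    have hP : PP q (r + 1) (t + 1) = PP q (r + 1) t * (1 - q ^ (r + 1 + t)) := by
      simp only [PP]
      rw [Finset.prod_range_succ]
    simp only [hb, hc, hd]
    rw [hP]
    have E1 : r * (t + 1) + (penta r + r) = r * t + (penta r + 2 * r) := by ring
    have E2 : (r + 1) * t + penta (r + 1) = r * t + (penta r + 2 * r) + (r + 1 + t) := by
      simp only [penta]; ring
    rw [E1, E2, pow_add]
    ring
  -- sum the identities
  have hb_eq : ∑' t, b t = b 0 + (∑' t, c t - ∑' t, d t) := by
    rw [Summable.tsum_eq_zero_add hsb]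
    congr 1
    rw [← Summable.tsum_sub hsc hsd]
    exact tsum_congr hstep2
  have ha_eq : ∑' t, a t = a 0 + (∑' t, b t - ∑' t, c t) := by
    rw [Summable.tsum_eq_zero_add hsa]
    congr 1
    rw [← Summable.tsum_sub hsb hsc]
    exact tsum_congr hstep1
  have hRRr : RR q r = ∑' t, a t := rfl
  have hRRr1 : RR q (r + 1) = ∑' t, d t := rfl
  have ha0 : a 0 = q ^ penta r := by simp [ha, PP]
  have hb0 : b 0 = q ^ (penta r + r) := by simp [hb, PP]
  rw [hRRr, hRRr1, ha_eq, hb_eq, ha0, hb0]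
  ring

lemma summable_log (hq0 : 0 < q) (hq1 : q < 1) : Summable (fun k : ℕ => Real.log (1 - q ^ (k + 1))) := by
  have hqk : ∀ k : ℕ, q ^ (k + 1) < 1 := fun k => pow_lt_one₀ hq0.le hq1 (by omega)
  have hpos : ∀ k : ℕ, 0 < 1 - q ^ (k + 1) := fun k => by linarith [hqk k]
  apply Summable.of_norm
  have hgeo : Summable (fun k : ℕ => (1 - q) ⁻¹ * (q * q ^ k)) := by
    apply Summable.mul_left
    exact (summable_geometric_of_lt_one hq0.le hq1).mul_left q
  apply Summable.of_nonneg_of_le (fun k => norm_nonneg _) _ hgeo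
  intro k
  have h1 : Real.log (1 - q ^ (k + 1)) ≤ 0 :=
    Real.log_nonpos (hpos k).le (by nlinarith [pow_pos hq0 (k + 1)])
  rw [Real.norm_eq_abs, abs_of_nonpos h1]
  have h2 : -Real.log (1 - q ^ (k + 1)) = Real.log (1 - q ^ (k + 1))⁻¹ := by
    rw [Real.log_inv]
  rw [h2]
  have h3 : Real.log (1 - q ^ (k + 1))⁻¹ ≤ (1 - q ^ (k + 1))⁻¹ - 1 :=
    Real.log_le_sub_one_of_pos (inv_pos.mpr (hpos k))
  have h4 : (1 - q ^ (k + 1))⁻¹ - 1 = q ^ (k + 1) / (1 - q ^ (k + 1)) := by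
    rw [eq_div_iff (ne_of_gt (hpos k)), sub_mul, inv_mul_cancel₀ (ne_of_gt (hpos k))]
    ring
  have h5 : q ^ (k + 1) / (1 - q ^ (k + 1)) ≤ q ^ (k + 1) / (1 - q) := by
    apply div_le_div_of_nonneg_left (by positivity) (by linarith) _
    have : q ^ (k + 1) ≤ q := by
      calc q ^ (k + 1) ≤ q ^ 1 := pow_le_pow_of_le_one hq0.le hq1.le (by omega)
        _ = q := pow_one q
    linarith
  have h6 : q ^ (k + 1) / (1 - q) = (1 - q)⁻¹ * (q * q ^ k) := by
    rw [pow_succ]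
    field_simp
  linarith [h3, h4, h5, h6]

lemma prod_eq (hq0 : 0 < q) (hq1 : q < 1) : (∏' k : ℕ, (1 - q ^ (k + 1))) = 1 - RR q 1 := by
  have hqk : ∀ k : ℕ, q ^ (k + 1) < 1 := fun k => pow_lt_one₀ hq0.le hq1 (by omega)
  have hpos : ∀ k : ℕ, 0 < 1 - q ^ (k + 1) := fun k => by linarith [hqk k]
  -- multipliable
  have hmult : Multipliable (fun k : ℕ => 1 - q ^ (k + 1)) := by
    have := Real.multipliable_of_summable_log hpos (summable_log hq0 hq1)
    exact this
  have hprod := hmult.hasProd.tendsto_prod_nat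
  -- partial products satisfy the telescoping identity
  have hkey : ∀ N : ℕ, (∏ k ∈ Finset.range N, (1 - q ^ (k + 1)))
      = 1 - ∑ t ∈ Finset.range N, q ^ (1 * t + penta 1) * PP q 1 t := by
    intro N
    induction N with
    | zero => simp
    | succ N ih =>
      rw [Finset.prod_range_succ, Finset.sum_range_succ, ih]
      have hPPN : PP q 1 N = ∏ k ∈ Finset.range N, (1 - q ^ (k + 1)) := by
        apply Finset.prod_congr rfl
        intro i _
        have h : 1 + i = i + 1 := by omega
        rw [h]
      rw [hPPN]
      have h2 : (1 : ℕ) * N + penta 1 = N + 1 := by simp [penta]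
      rw [h2, ih]
      ring
  have hsum := ((RR_summable hq0 hq1 1 le_rfl).hasSum).tendsto_sum_nat
  have htend : Filter.Tendsto (fun N => ∏ k ∈ Finset.range N, (1 - q ^ (k + 1)))
      Filter.atTop (nhds (1 - RR q 1)) := by
    have := (tendsto_const_nhds (x := (1:ℝ)) (f := Filter.atTop)).sub hsum
    apply this.congr
    intro N
    exact (hkey N).symm
  exact tendsto_nhds_unique hprod htend

end aux

/-- tail estimate for Euler's pentagonal number series. -/
theorem stmt_16 (q : ℝ) (hq0 : 0 < q) (hq1 : q < 1) (n : ℕ) :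
    |(∏' k : ℕ, (1 - q ^ (k + 1))) - 1 -
        ∑ m ∈ Finset.Icc 1 n,
          (-1 : ℝ) ^ m * (q ^ (m * (3 * m - 1) / 2) + q ^ (m * (3 * m + 1) / 2))| ≤
      2 * q ^ ((n + 1) * (3 * n + 2) / 2) := by
  -- rewrite the sum in terms of penta
  have hsum_eq : ∀ n : ℕ, ∑ m ∈ Finset.Icc 1 n,
      (-1 : ℝ) ^ m * (q ^ (m * (3 * m - 1) / 2) + q ^ (m * (3 * m + 1) / 2))
      = ∑ m ∈ Finset.Icc 1 n, (-1 : ℝ) ^ m * (q ^ penta m + q ^ (penta m + m)) := by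
    intro N
    apply Finset.sum_congr rfl
    intro m _
    rw [← penta_add, ← penta_eq]
  -- key identity by induction
  have hkey : ∀ N : ℕ, (∏' k : ℕ, (1 - q ^ (k + 1))) - 1 -
      ∑ m ∈ Finset.Icc 1 N, (-1 : ℝ) ^ m * (q ^ penta m + q ^ (penta m + m))
      = (-1 : ℝ) ^ (N + 1) * RR q (N + 1) := by
    intro N
    induction N with
    | zero =>
      simp [prod_eq hq0 hq1]
    | succ N ih =>
      rw [Finset.sum_Icc_succ_top (by omega : 1 ≤ N + 1)]
      have : (∏' k : ℕ, (1 - q ^ (k + 1))) - 1 -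
          (∑ m ∈ Finset.Icc 1 N, (-1 : ℝ) ^ m * (q ^ penta m + q ^ (penta m + m)) +
            (-1 : ℝ) ^ (N + 1) * (q ^ penta (N + 1) + q ^ (penta (N + 1) + (N + 1))))
          = (-1 : ℝ) ^ (N + 1) * RR q (N + 1) -
            (-1 : ℝ) ^ (N + 1) * (q ^ penta (N + 1) + q ^ (penta (N + 1) + (N + 1))) := by
        rw [← ih]; ring
      rw [this, RR_rec hq0 hq1 (N + 1) (by omega)]
      ring
  rw [hsum_eq, hkey]
  have hR1 : 0 ≤ RR q (n + 1) := RR_nonneg hq0 hq1 _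
  have hR2 : 0 ≤ RR q (n + 2) := RR_nonneg hq0 hq1 _
  have hub : RR q (n + 1) ≤ 2 * q ^ penta (n + 1) := by
    rw [RR_rec hq0 hq1 (n + 1) (by omega)]
    have : q ^ (penta (n + 1) + (n + 1)) ≤ q ^ penta (n + 1) :=
      pow_le_pow_of_le_one hq0.le hq1.le (by omega)
    linarith
  have habs : |(-1 : ℝ) ^ (n + 1) * RR q (n + 1)| = RR q (n + 1) := by
    rw [abs_mul, abs_pow, abs_neg, abs_one, one_pow, one_mul, abs_of_nonneg hR1]
  rw [habs]
  have hexp : (n + 1) * (3 * n + 2) / 2 = penta (n + 1) := by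
    have h : 3 * (n + 1) - 1 = 3 * n + 2 := by omega
    rw [penta_eq, h]
  rw [hexp]
  exact hub
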